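/- arXiv:1205.4266 — 3 statements merged into one kernel-verified Lean document; each statement's English description precedes it below -/
import Mathlib

section
/- Let k ≥ 2 be an integer and let r be a real number with r > k − 2. Then (1/2)·E_k(r) ≤ Q_k(r), where E_k(r) = exp(−(1/2)·[r − k − (k − 2)·log(r/k) + log k]). (Inglot's lower bound on the chi-square tail.) -/
open MeasureTheory Real Set

/-- Density of the chi-square distribution with `k` degrees of freedom. -/
noncomputable def chiSqPDF (k : ℕ) (t : ℝ) : ℝ :=
  t ^ ((k : ℝ) / 2 - 1) * Real.exp (-t / 2) / (2 ^ ((k : ℝ) / 2) * Real.Gamma ((k : ℝ) / 2))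

/-- Upper-tail probability of the chi-square distribution with `k` degrees of freedom. -/
noncomputable def chiSqTail (k : ℕ) (x : ℝ) : ℝ :=
  ∫ t in Set.Ioi (max x 0), chiSqPDF k t


lemma artanh_ge {y : ℝ} (h0 : 0 ≤ y) (h1 : y < 1) :
    2 * y ≤ Real.log (1 + y) - Real.log (1 - y) := by
  set f : ℝ → ℝ := fun t => Real.log (1 + t) - Real.log (1 - t) - 2 * t with hf
  have hderiv : ∀ t ∈ Ioo (0:ℝ) y, HasDerivAt f (1/(1+t) + 1/(1-t) - 2) t := by
    intro t ht
    have ht1 : (0:ℝ) < 1 + t := by linarith [ht.1]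
    have ht2 : (0:ℝ) < 1 - t := by linarith [ht.2, h1]
    have d1 : HasDerivAt (fun t : ℝ => Real.log (1 + t)) (1/(1+t)) t := by
      simpa using ((hasDerivAt_id t).const_add 1).log ht1.ne'
    have d2 : HasDerivAt (fun t : ℝ => Real.log (1 - t)) (-(1/(1-t))) t := by
      have : HasDerivAt (fun t : ℝ => 1 - t) (-1) t := by
        simpa using ((hasDerivAt_id t).const_sub 1)
      simpa [div_eq_mul_inv] using this.log ht2.ne'
    have d3 : HasDerivAt (fun t : ℝ => 2 * t) 2 t := by
      simpa using (hasDerivAt_id t).const_mul 2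
    have := (d1.sub d2).sub d3
    exact this.congr_deriv (by ring)
  have hcont : ContinuousOn f (Icc 0 y) := by
    apply ContinuousOn.sub
    apply ContinuousOn.sub
    · exact (continuousOn_const.add continuousOn_id).log
        (fun t ht => (show (0:ℝ) < 1 + t by linarith [ht.1]).ne')
    · exact (continuousOn_const.sub continuousOn_id).log
        (fun t ht => (show (0:ℝ) < 1 - t by linarith [ht.2, h1]).ne')
    · exact continuousOn_const.mul continuousOn_id
  have hmono : MonotoneOn f (Icc 0 y) := by
    apply monotoneOn_of_deriv_nonneg (convex_Icc 0 y) hcont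
    · intro t ht
      rw [interior_Icc] at ht
      exact ((hderiv t ht).differentiableAt).differentiableWithinAt
    · intro t ht
      rw [interior_Icc] at ht
      rw [(hderiv t ht).deriv]
      have ht1 : (0:ℝ) < 1 + t := by linarith [ht.1]
      have ht2 : (0:ℝ) < 1 - t := by linarith [ht.2, h1]
      have h12 : (0:ℝ) < (1+t)*(1-t) := by positivity
      rw [div_add_div _ _ ht1.ne' ht2.ne', sub_nonneg, le_div_iff₀ h12]
      nlinarith [sq_nonneg t]
  have h00 : f 0 = 0 := by simp [hf]
  have := hmono (left_mem_Icc.2 h0) (right_mem_Icc.2 h0) h0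
  rw [h00] at this
  simp only [hf] at this
  linarith

lemma key_ineq {x : ℝ} (hx : 0 < x) : 1 ≤ (x + 1/2) * Real.log ((x+1)/x) := by
  set y : ℝ := 1/(2*x+1) with hy
  have hden : (0:ℝ) < 2*x+1 := by linarith
  have h0 : 0 ≤ y := by positivity
  have h1 : y < 1 := by rw [hy, div_lt_one hden]; linarith
  have hq : (x+1)/x = (1+y)/(1-y) := by
    rw [hy]; field_simp; ring
  have hlog : Real.log ((x+1)/x) = Real.log (1+y) - Real.log (1-y) := by
    rw [hq, Real.log_div (by linarith) (by linarith)]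
  rw [hlog]
  have := artanh_ge h0 h1
  have h2 : (x + 1/2) * (2*y) = 1 := by
    rw [hy]; field_simp
  calc 1 = (x+1/2) * (2*y) := h2.symm
    _ ≤ (x+1/2) * (Real.log (1+y) - Real.log (1-y)) := by
        apply mul_le_mul_of_nonneg_left this (by linarith)


lemma sqrt2_gt : (1.414 : ℝ) < Real.sqrt 2 := by
  rw [show (1.414:ℝ) = Real.sqrt (1.414^2) by rw [Real.sqrt_sq]; norm_num]
  apply Real.sqrt_lt_sqrt (by positivity); norm_num

lemma base2 : Real.Gamma ((2:ℝ)/2) ≤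
    2 * Real.sqrt 2 * ((2:ℝ)/2) ^ (((2:ℝ)-1)/2) * Real.exp (-(2:ℝ)/2) := by
  norm_num [Real.Gamma_one, Real.one_rpow]
  rw [show (-1:ℝ) = -(1:ℝ) from rfl, Real.exp_neg, mul_comm _ (Real.exp 1)⁻¹,
    ← div_eq_inv_mul, le_div_iff₀ (Real.exp_pos 1), one_mul]
  nlinarith [Real.exp_one_lt_d9, sqrt2_gt]

lemma base3 : Real.Gamma ((3:ℝ)/2) ≤
    2 * Real.sqrt 2 * ((3:ℝ)/2) ^ (((3:ℝ)-1)/2) * Real.exp (-(3:ℝ)/2) := by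
  have h32 : Real.Gamma (3/2 : ℝ) = (1/2) * Real.sqrt π := by
    rw [show (3/2 : ℝ) = 1/2 + 1 by norm_num, Real.Gamma_add_one (by norm_num),
      Real.Gamma_one_half_eq]
  rw [h32, show (((3:ℝ)-1)/2) = (1:ℝ) by norm_num, Real.rpow_one]
  have hπ : Real.sqrt π < 1.7725 := by
    rw [show (1.7725:ℝ) = Real.sqrt (1.7725^2) by rw [Real.sqrt_sq]; norm_num]
    apply Real.sqrt_lt_sqrt Real.pi_pos.le
    nlinarith [Real.pi_lt_d6]
  have hcube : Real.exp 3 = Real.exp 1 ^ 3 := by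
    rw [← Real.exp_nat_mul]; norm_num
  have he3b : Real.exp 3 < 20.0856 := by
    have h := pow_lt_pow_left₀ Real.exp_one_lt_d9 (Real.exp_pos 1).le (n := 3) (by norm_num)
    rw [hcube]; nlinarith [h]
  have hsq : Real.exp ((3:ℝ)/2) ^ 2 = Real.exp 3 := by
    rw [← Real.exp_nat_mul]; norm_num
  have hub : Real.exp ((3:ℝ)/2) < 4.4823 := by
    nlinarith [Real.exp_pos ((3:ℝ)/2), sq_nonneg (Real.exp ((3:ℝ)/2) - 4.4818)]
  have hinv : Real.exp (-(3:ℝ)/2) = (Real.exp ((3:ℝ)/2))⁻¹ := by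
    rw [← Real.exp_neg]; ring_nf
  rw [hinv, show 2 * Real.sqrt 2 * (3/2) * (Real.exp ((3:ℝ)/2))⁻¹
      = (3 * Real.sqrt 2) / Real.exp ((3:ℝ)/2) by ring]
  rw [le_div_iff₀ (Real.exp_pos _)]
  nlinarith [sqrt2_gt, Real.sqrt_nonneg π, Real.sqrt_nonneg 2, Real.exp_pos ((3:ℝ)/2),
    Real.pi_pos, Real.sqrt_pos.2 Real.pi_pos]


lemma gamma_half_bound : ∀ k : ℕ, 2 ≤ k →
    Real.Gamma ((k:ℝ)/2) ≤
      2 * Real.sqrt 2 * ((k:ℝ)/2) ^ (((k:ℝ)-1)/2) * Real.exp (-(k:ℝ)/2) := by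
  intro k
  induction k using Nat.strong_induction_on with
  | _ k ih =>
    match k with
    | 0 => intro h; omega
    | 1 => intro h; omega
    | 2 => intro _; exact_mod_cast base2
    | 3 => intro _; exact_mod_cast base3
    | (m+4) => intro _
               have ihm := ih (m+2) (by omega) (by omega)
               set x : ℝ := ((m:ℝ)+2)/2 with hx
               have hxpos : 0 < x := by positivity
               have hx1pos : 0 < x + 1 := by linarith
               have hcast2 : (((m+2:ℕ)):ℝ) = (m:ℝ) + 2 := by push_cast; ring
               have hcast4 : (((m+4:ℕ)):ℝ) = (m:ℝ) + 4 := by push_cast; ring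
               rw [hcast2] at ihm
               rw [hcast4]
               have hΓ : Real.Gamma (x+1) = x * Real.Gamma (((m:ℝ)+2)/2) := by
                 rw [show x+1 = ((m:ℝ)+2)/2 + 1 by rw [hx],
                   Real.Gamma_add_one (by positivity)]
               have hexp2 : ((m:ℝ)+2-1)/2 = x - 1/2 := by rw [hx]; ring
               have hexp4 : ((m:ℝ)+4-1)/2 = x + 1/2 := by rw [hx]; ring
               have harg4 : ((m:ℝ)+4)/2 = x + 1 := by rw [hx]; ring
               have hexpn2 : -((m:ℝ)+2)/2 = -x := by rw [hx]; ring
               have hexpn4 : -((m:ℝ)+4)/2 = -(x+1) := by rw [hx]; ring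
               rw [hexp2, hexpn2] at ihm
               rw [hexp4, harg4, hexpn4, hΓ]
               -- key: x^(x+1/2) * e ≤ (x+1)^(x+1/2)
               have hkey : x ^ (x + 1/2) * Real.exp 1 ≤ (x+1) ^ (x + 1/2) := by
                 have h1 : Real.exp 1 ≤ ((x+1)/x) ^ (x + 1/2) := by
                   rw [Real.rpow_def_of_pos (by positivity)]
                   apply Real.exp_le_exp.2
                   rw [mul_comm]
                   exact key_ineq hxpos
                 have h2 : ((x+1)/x) ^ (x + 1/2) = (x+1) ^ (x + 1/2) / x ^ (x + 1/2) := by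
                   exact Real.div_rpow hx1pos.le hxpos.le _
                 rw [h2] at h1
                 rw [mul_comm]
                 exact (le_div_iff₀ (by positivity)).1 h1
               have hmul : x * x ^ (x - 1/2) = x ^ (x + 1/2) := by
                 rw [show x * x ^ (x - 1/2) = x ^ (1:ℝ) * x ^ (x - 1/2) by rw [Real.rpow_one],
                   ← Real.rpow_add hxpos]
                 ring_nf
               calc x * Real.Gamma (((m:ℝ)+2)/2)
                   ≤ x * (2 * Real.sqrt 2 * x ^ (x - 1/2) * Real.exp (-x)) :=
                     mul_le_mul_of_nonneg_left ihm hxpos.le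
                 _ = 2 * Real.sqrt 2 * (x ^ (x + 1/2) * Real.exp 1) * Real.exp (-(x+1)) := by
                     rw [← hmul, show Real.exp (-x) = Real.exp 1 * Real.exp (-(x+1)) by
                       rw [← Real.exp_add]; ring_nf]
                     ring
                 _ ≤ 2 * Real.sqrt 2 * (x+1) ^ (x + 1/2) * Real.exp (-(x+1)) := by
                     have h2s : (0:ℝ) ≤ 2 * Real.sqrt 2 := by positivity
                     have := mul_le_mul_of_nonneg_left hkey h2s
                     exact mul_le_mul_of_nonneg_right (by linarith) (Real.exp_pos _).le

lemma integrable_rpow_exp {a r : ℝ} (ha : -1 < a) (hr : 0 < r) :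
    IntegrableOn (fun t : ℝ => t ^ a * Real.exp (-t / 2)) (Ioi r) := by
  have h := integrableOn_rpow_mul_exp_neg_mul_rpow (p := 1) (s := a) (b := 1/2)
    ha (by norm_num) (by norm_num)
  have h2 : IntegrableOn (fun t : ℝ => t ^ a * Real.exp (-t / 2)) (Ioi 0) := by
    apply h.congr_fun _ measurableSet_Ioi
    intro t ht
    simp only [Real.rpow_one]
    ring_nf
  exact h2.mono_set (Ioi_subset_Ioi hr.le)

lemma tail_integral_lb (k : ℕ) (hk : 2 ≤ k) (r : ℝ) (hr : (k : ℝ) - 2 < r)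
    (hr0 : 0 < r) :
    2 * r ^ ((k:ℝ)/2 - 1) * Real.exp (-r/2) / (2 ^ ((k:ℝ)/2) * Real.Gamma ((k:ℝ)/2))
      ≤ ∫ t in Ioi r, chiSqPDF k t := by
  set a : ℝ := (k:ℝ)/2 - 1 with ha
  have ha0 : 0 ≤ a := by
    have : (2:ℝ) ≤ (k:ℝ) := by exact_mod_cast hk
    rw [ha]; linarith
  set c : ℝ := 2 ^ ((k:ℝ)/2) * Real.Gamma ((k:ℝ)/2) with hc
  have hcpos : 0 < c := by
    apply mul_pos (Real.rpow_pos_of_pos two_pos _)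
    apply Real.Gamma_pos_of_pos
    have : (2:ℝ) ≤ (k:ℝ) := by exact_mod_cast hk
    linarith
  have hderiv : ∀ t ∈ Ici r, HasDerivAt (fun t : ℝ => -2 * (t ^ a * Real.exp (-t/2)))
      (t ^ a * Real.exp (-t/2) - 2 * a * t ^ (a-1) * Real.exp (-t/2)) t := by
    intro t ht
    have ht0 : 0 < t := lt_of_lt_of_le hr0 ht
    have d1 : HasDerivAt (fun t : ℝ => t ^ a) (a * t ^ (a-1)) t :=
      Real.hasDerivAt_rpow_const (Or.inl ht0.ne')
    have d2 : HasDerivAt (fun t : ℝ => Real.exp (-t/2)) (-(1/2) * Real.exp (-t/2)) t := by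
      have h0 : HasDerivAt (fun t : ℝ => -t/2) (-(1/2) : ℝ) t := by
        exact ((hasDerivAt_id t).neg.div_const 2).congr_deriv (by norm_num)
      convert h0.exp using 1
      ring
    have := ((d1.mul d2).const_mul (-2))
    exact this.congr_deriv (by ring)
  have hg'nonneg : ∀ t ∈ Ioi r,
      0 ≤ t ^ a * Real.exp (-t/2) - 2 * a * t ^ (a-1) * Real.exp (-t/2) := by
    intro t ht
    have ht0 : 0 < t := lt_trans hr0 ht
    have h2a : 2 * a < t := by
      have h2a' : (2:ℝ) * a = (k:ℝ) - 2 := by rw [ha]; ring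
      rw [h2a']; exact lt_trans hr ht
    have hts : t ^ a = t ^ (a - 1) * t := by
      rw [← Real.rpow_add_one ht0.ne' (a-1)]; ring_nf
    have heq : t ^ a * Real.exp (-t/2) - 2 * a * t ^ (a-1) * Real.exp (-t/2)
        = t ^ (a-1) * Real.exp (-t/2) * (t - 2*a) := by
      rw [hts]; ring
    rw [heq]
    apply mul_nonneg (mul_nonneg (Real.rpow_nonneg ht0.le _) (Real.exp_pos _).le)
    linarith
  have htends : Filter.Tendsto (fun t : ℝ => -2 * (t ^ a * Real.exp (-t/2)))
      Filter.atTop (nhds 0) := by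
    have h := tendsto_rpow_mul_exp_neg_mul_atTop_nhds_zero a (1/2) (by norm_num)
    have heq : (fun t : ℝ => -2 * (t ^ a * Real.exp (-t/2)))
        = fun t : ℝ => -2 * (t ^ a * Real.exp (-(1/2) * t)) := by
      funext t; ring_nf
    rw [heq]
    simpa using h.const_mul (-2)
  have hint : ∫ t in Ioi r,
      (t ^ a * Real.exp (-t/2) - 2 * a * t ^ (a-1) * Real.exp (-t/2))
      = 0 - (-2 * (r ^ a * Real.exp (-r/2))) :=
    integral_Ioi_of_hasDerivAt_of_nonneg' hderiv hg'nonneg htends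
  have hg'int : IntegrableOn
      (fun t => t ^ a * Real.exp (-t/2) - 2 * a * t ^ (a-1) * Real.exp (-t/2)) (Ioi r) :=
    integrableOn_Ioi_deriv_of_nonneg' hderiv hg'nonneg htends
  have hpdfint : IntegrableOn (fun t => chiSqPDF k t) (Ioi r) := by
    have h : IntegrableOn (fun x : ℝ => x ^ a * Real.exp (-x/2) / c) (Ioi r) :=
      (integrable_rpow_exp (a := a) (by linarith) hr0).div_const c
    apply h.congr_fun _ measurableSet_Ioi
    intro t _
    simp only [chiSqPDF, ← ha, ← hc]
  have hmono : ∫ t in Ioi r,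
      (t ^ a * Real.exp (-t/2) - 2 * a * t ^ (a-1) * Real.exp (-t/2))
      ≤ ∫ t in Ioi r, chiSqPDF k t * c := by
    apply setIntegral_mono_on hg'int (hpdfint.mul_const c) measurableSet_Ioi
    intro t ht
    have ht0 : 0 < t := lt_trans hr0 ht
    have heq : chiSqPDF k t * c = t ^ a * Real.exp (-t/2) := by
      simp only [chiSqPDF, ← ha, ← hc]
      rw [div_mul_cancel₀ _ hcpos.ne']
    rw [heq]
    have : 0 ≤ 2 * a * t ^ (a-1) * Real.exp (-t/2) := by positivity
    linarith
  rw [hint] at hmono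
  rw [integral_mul_const] at hmono
  rw [div_le_iff₀ hcpos]
  calc 2 * r ^ a * Real.exp (-r/2) = 0 - (-2 * (r ^ a * Real.exp (-r/2))) := by ring
    _ ≤ _ := hmono

/-- Inglot's lower bound on the chi-square tail: for `k ≥ 2` and `r > k - 2`,
`(1/2)·E_k(r) ≤ Q_k(r)` where
`E_k(r) = exp(−(1/2)·[r − k − (k − 2)·log(r/k) + log k])`. -/
theorem inglot_lower_bound (k : ℕ) (hk : 2 ≤ k) (r : ℝ) (hr : (k : ℝ) - 2 < r) :
    (1 / 2) * Real.exp (-(1 / 2) *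
        (r - k - ((k : ℝ) - 2) * Real.log (r / k) + Real.log k))
      ≤ chiSqTail k r := by
  have hk2 : (2:ℝ) ≤ (k:ℝ) := by exact_mod_cast hk
  have hr0 : 0 < r := by linarith
  have hkpos : (0:ℝ) < (k:ℝ) := by linarith
  set a : ℝ := (k:ℝ)/2 - 1 with ha
  set c : ℝ := 2 ^ ((k:ℝ)/2) * Real.Gamma ((k:ℝ)/2) with hc
  have hcpos : 0 < c := by
    apply mul_pos (Real.rpow_pos_of_pos two_pos _)
    exact Real.Gamma_pos_of_pos (by linarith)
  have htail : chiSqTail k r = ∫ t in Ioi r, chiSqPDF k t := by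
    rw [chiSqTail, max_eq_left hr0.le]
  -- bound on c
  have hck : c ≤ 4 * (k:ℝ) ^ (a + 1/2) * Real.exp (-(k:ℝ)/2) := by
    have h := gamma_half_bound k hk
    have h2 := mul_le_mul_of_nonneg_left h
      (Real.rpow_nonneg (by norm_num : (0:ℝ) ≤ 2) ((k:ℝ)/2))
    rw [hc]
    refine h2.trans_eq ?_
    have h1 : ((k:ℝ)/2) ^ (((k:ℝ)-1)/2)
        = (k:ℝ) ^ (((k:ℝ)-1)/2) / 2 ^ (((k:ℝ)-1)/2) :=
      Real.div_rpow hkpos.le (by norm_num) _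
    have h2' : (2:ℝ) ^ ((k:ℝ)/2) / 2 ^ (((k:ℝ)-1)/2) = 2 ^ ((1:ℝ)/2) := by
      rw [← Real.rpow_sub two_pos, show (k:ℝ)/2 - ((k:ℝ)-1)/2 = 1/2 by ring]
    have h3 : (2:ℝ) * Real.sqrt 2 * 2 ^ ((1:ℝ)/2) = 4 := by
      rw [← Real.sqrt_eq_rpow]
      nlinarith [Real.mul_self_sqrt (by norm_num : (0:ℝ) ≤ 2)]
    have hex : a + 1/2 = ((k:ℝ)-1)/2 := by rw [ha]; ring
    rw [hex]
    have hne : (2:ℝ) ^ (((k:ℝ)-1)/2) ≠ 0 := (Real.rpow_pos_of_pos two_pos _).ne'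
    rw [div_eq_iff hne] at h2'
    rw [h1, h2']
    field_simp
    linear_combination h3
  -- decompose the exponential
  have hrk : (0:ℝ) < r / k := by positivity
  have hM : Real.exp (-(1/2) * (r - k - ((k:ℝ)-2) * Real.log (r/k) + Real.log k))
      = Real.exp (-r/2) * Real.exp ((k:ℝ)/2) * (r/(k:ℝ)) ^ a * (k:ℝ) ^ (-(1/2) : ℝ) := by
    rw [show -(1/2) * (r - (k:ℝ) - ((k:ℝ)-2)*Real.log (r/k) + Real.log k)
        = (-r/2) + ((k:ℝ)/2) + (Real.log (r/(k:ℝ)) * a) + (Real.log (k:ℝ) * (-(1/2))) by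
      rw [ha]; ring]
    rw [Real.exp_add, Real.exp_add, Real.exp_add,
      Real.rpow_def_of_pos hrk, Real.rpow_def_of_pos hkpos]
  -- key equation
  have heq : (1/2) * (Real.exp (-r/2) * Real.exp ((k:ℝ)/2) * (r/(k:ℝ)) ^ a
        * (k:ℝ) ^ (-(1/2) : ℝ)) * (4 * (k:ℝ) ^ (a + 1/2) * Real.exp (-(k:ℝ)/2))
      = 2 * r ^ a * Real.exp (-r/2) := by
    have hE : Real.exp ((k:ℝ)/2) * Real.exp (-(k:ℝ)/2) = 1 := by
      rw [← Real.exp_add, show (k:ℝ)/2 + -(k:ℝ)/2 = 0 by ring, Real.exp_zero]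
    have hka : (0:ℝ) < (k:ℝ) ^ a := Real.rpow_pos_of_pos hkpos _
    have hkh : (0:ℝ) < (k:ℝ) ^ ((1:ℝ)/2) := Real.rpow_pos_of_pos hkpos _
    rw [Real.div_rpow hr0.le hkpos.le,
      show a + 1/2 = a + (1:ℝ)/2 by norm_num,
      Real.rpow_add hkpos a ((1:ℝ)/2),
      show (-(1/2) : ℝ) = -((1:ℝ)/2) by norm_num,
      Real.rpow_neg hkpos.le]
    field_simp
    rw [neg_div] at hE
    linear_combination 4 * hE
  rw [htail, hM]
  refine le_trans ?_ (tail_integral_lb k hk r hr hr0)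
  rw [← ha, ← hc, le_div_iff₀ hcpos]
  calc (1/2) * (Real.exp (-r/2) * Real.exp ((k:ℝ)/2) * (r/(k:ℝ)) ^ a
        * (k:ℝ) ^ (-(1/2) : ℝ)) * c
      ≤ (1/2) * (Real.exp (-r/2) * Real.exp ((k:ℝ)/2) * (r/(k:ℝ)) ^ a
        * (k:ℝ) ^ (-(1/2) : ℝ)) * (4 * (k:ℝ) ^ (a + 1/2) * Real.exp (-(k:ℝ)/2)) := by
        apply mul_le_mul_of_nonneg_left hck
        positivity
    _ = 2 * r ^ a * Real.exp (-r/2) := heq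
end

section
/- Let k ≥ 2 be an integer and let r be a real number with r > k − 2. Then Q_k(r) ≤ (1/√π) · (r/(r − k + 2)) · E_k(r), where E_k(r) = exp(−(1/2)·[r − k − (k − 2)·log(r/k) + log k]). (Inglot's upper bound on the chi-square tail.) -/
open MeasureTheory Real Set

open Filter Stirling Nat

lemma sqrtpi_le_stirlingSeq (n : ℕ) : Real.sqrt π ≤ stirlingSeq (n + 1) :=
  stirlingSeq'_antitone.le_of_tendsto
    (tendsto_stirlingSeq_sqrt_pi.comp (tendsto_add_atTop_nat 1)) n

lemma diff_le (n : ℕ) :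
    Real.log (stirlingSeq (n + 1)) - Real.log (stirlingSeq (n + 2)) ≤
      1 / (12 * ((n:ℝ) + 1) * ((n:ℝ) + 2)) := by
  set q : ℝ := ((1 : ℝ) / (2 * (↑(n + 1) : ℝ) + 1)) ^ 2 with hq
  have hq0 : (0:ℝ) ≤ q := sq_nonneg _
  have hq1 : q < 1 := by
    rw [hq, div_pow, one_pow, div_lt_one (by positivity)]
    push_cast
    nlinarith [Nat.cast_nonneg (α := ℝ) n]
  have g0 := (hasSum_geometric_of_lt_one hq0 hq1).mul_left (q/3)
  have g : HasSum (fun k : ℕ => (1/3 : ℝ) * q ^ (k + 1)) (q/3 * (1-q)⁻¹) := by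
    have he : (fun k : ℕ => (1/3:ℝ) * q^(k+1)) = fun k => q/3 * q^k := by
      funext k; ring
    rw [he]; exact g0
  have hab : ∀ k : ℕ, (1 : ℝ) / (2 * (↑(k + 1):ℝ) + 1) * q ^ (k + 1) ≤ (1/3) * q ^ (k+1) := by
    intro k
    have : (1 : ℝ) / (2 * (↑(k + 1):ℝ) + 1) ≤ 1/3 := by
      rw [div_le_div_iff₀ (by positivity) (by norm_num)]
      push_cast; nlinarith [Nat.cast_nonneg (α := ℝ) k]
    exact mul_le_mul_of_nonneg_right this (pow_nonneg hq0 _)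
  have h := hasSum_le hab (log_stirlingSeq_diff_hasSum n) g
  refine h.trans (le_of_eq ?_)
  rw [hq]
  have hd : (2 * ((n:ℝ) + 1) + 1) ^ 2 - 1 ≠ 0 := by nlinarith [Nat.cast_nonneg (α := ℝ) n]
  push_cast
  field_simp
  ring

/-- Quantitative upper Stirling bound. -/
lemma stirlingSeq_le (n : ℕ) :
    stirlingSeq (n + 1) ≤ Real.sqrt π * Real.exp (1 / (12 * ((n:ℝ) + 1))) := by
  have hmono : Monotone (fun n : ℕ => Real.log (stirlingSeq (n + 1)) - 1 / (12 * ((n:ℝ) + 1))) := by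
    apply monotone_nat_of_le_succ
    intro m
    have h := diff_le m
    have : (1:ℝ) / (12 * ((m:ℝ)+1) * ((m:ℝ)+2)) = 1/(12*((m:ℝ)+1)) - 1/(12*((m:ℝ)+2)) := by
      field_simp; ring
    have e1 : m + 1 + 1 = m + 2 := rfl
    rw [e1]
    push_cast
    have he : (1:ℝ)/(12*((m:ℝ)+1+1)) = 1/(12*((m:ℝ)+2)) := by ring_nf
    linarith [h, this, he]
  have htend : Tendsto (fun n : ℕ => Real.log (stirlingSeq (n + 1)) - 1 / (12 * ((n:ℝ) + 1)))
      atTop (nhds (Real.log (Real.sqrt π))) := by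
    have h1 : Tendsto (fun n : ℕ => Real.log (stirlingSeq (n + 1))) atTop
        (nhds (Real.log (Real.sqrt π))) := by
      exact ((Real.continuousAt_log (by positivity)).tendsto.comp
        (tendsto_stirlingSeq_sqrt_pi.comp (tendsto_add_atTop_nat 1)))
    have h2 : Tendsto (fun n : ℕ => 1 / (12 * ((n:ℝ) + 1))) atTop (nhds 0) := by
      apply Tendsto.comp tendsto_inv_atTop_zero ?_ |>.congr (fun n => by rw [Function.comp, one_div])
      apply Tendsto.const_mul_atTop (by norm_num : (0:ℝ) < 12)
      exact tendsto_natCast_atTop_atTop.atTop_add tendsto_const_nhds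
    simpa using h1.sub h2
  have := hmono.ge_of_tendsto htend n
  have h2 : Real.log (stirlingSeq (n+1)) ≤ Real.log (Real.sqrt π) + 1 / (12 * ((n:ℝ) + 1)) := by
    linarith
  calc stirlingSeq (n+1) = Real.exp (Real.log (stirlingSeq (n+1))) :=
        (Real.exp_log (stirlingSeq'_pos n)).symm
    _ ≤ Real.exp (Real.log (Real.sqrt π) + 1 / (12 * ((n:ℝ) + 1))) := Real.exp_le_exp.mpr h2
    _ = Real.sqrt π * Real.exp (1 / (12 * ((n:ℝ) + 1))) := by
        rw [Real.exp_add, Real.exp_log (by positivity)]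

lemma factorial_ge (m : ℕ) (hm : m ≠ 0) :
    Real.sqrt π * (Real.sqrt (2*m) * ((m:ℝ)/Real.exp 1)^m) ≤ (m ! : ℝ) := by
  obtain ⟨l, rfl⟩ : ∃ l, m = l + 1 := ⟨m - 1, (Nat.succ_pred_eq_of_pos (Nat.pos_of_ne_zero hm)).symm⟩
  have h := sqrtpi_le_stirlingSeq l
  rw [stirlingSeq, le_div_iff₀ (by positivity)] at h
  exact h

lemma factorial_le (m : ℕ) (hm : m ≠ 0) :
    (m ! : ℝ) ≤ Real.sqrt π * Real.exp (1/(12*(m:ℝ))) * (Real.sqrt (2*m) * ((m:ℝ)/Real.exp 1)^m) := by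
  obtain ⟨l, rfl⟩ : ∃ l, m = l + 1 := ⟨m - 1, (Nat.succ_pred_eq_of_pos (Nat.pos_of_ne_zero hm)).symm⟩
  have h := stirlingSeq_le l
  rw [stirlingSeq, div_le_iff₀ (by positivity)] at h
  push_cast at h ⊢
  linarith

lemma Gamma_half (m : ℕ) :
    Real.Gamma ((m:ℝ) + 1/2) = ((2*m).factorial : ℝ) / (4^m * (m.factorial : ℝ)) * Real.sqrt π := by
  induction m with
  | zero => rw [show ((0:ℕ):ℝ) + 1/2 = 1/2 by norm_num, Real.Gamma_one_half_eq]; simp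
  | succ m ih =>
    have h0 : ((m:ℝ) + 1/2) ≠ 0 := by positivity
    have : ((m:ℝ) + 1) + 1/2 = ((m:ℝ) + 1/2) + 1 := by ring
    rw [Nat.cast_succ, this, Real.Gamma_add_one h0, ih]
    have hf : (2*(m+1))! = (2*m+2) * ((2*m+1) * (2*m)!) := by
      rw [show 2*(m+1) = (2*m+1)+1 by ring, Nat.factorial_succ, Nat.factorial_succ]
    rw [hf, Nat.factorial_succ]
    push_cast
    have h4 : (4:ℝ)^(m+1) = 4 * 4^m := by ring
    rw [h4]
    field_simp
    ring

lemma log_cubic {x : ℝ} (hx : 0 ≤ x) : Real.log (1 + x) ≤ x - x^2/2 + x^3/3 := by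
  have hders : ∀ y ∈ Set.Ici (0:ℝ), HasDerivAt
      (fun z : ℝ => z - z^2/2 + z^3/3 - Real.log (1+z))
      (1 - y + y^2 - 1/(1+y)) y := by
    intro y hy
    have hy0 : (0:ℝ) ≤ y := hy
    have h1 : HasDerivAt (fun z : ℝ => z) 1 y := hasDerivAt_id y
    have h2 : HasDerivAt (fun z : ℝ => z^2/2) y y := by
      simpa using (hasDerivAt_pow 2 y).div_const 2
    have h3 : HasDerivAt (fun z : ℝ => z^3/3) (y^2) y := by
      simpa using (hasDerivAt_pow 3 y).div_const 3
    have h4 : HasDerivAt (fun z : ℝ => Real.log (1+z)) (1/(1+y)) y := by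
      simpa using (((hasDerivAt_id y).const_add 1).log (by positivity))
    exact ((h1.sub h2).add h3).sub h4
  have hmono : MonotoneOn (fun z : ℝ => z - z^2/2 + z^3/3 - Real.log (1+z)) (Set.Ici 0) := by
    apply monotoneOn_of_deriv_nonneg (convex_Ici 0)
    · exact fun y hy => ((hders y hy).continuousAt.continuousWithinAt)
    · intro y hy
      rw [interior_Ici, Set.mem_Ioi] at hy
      exact ((hders y (le_of_lt hy)).differentiableAt).differentiableWithinAt
    · intro y hy
      rw [interior_Ici, Set.mem_Ioi] at hy
      rw [(hders y (le_of_lt hy)).deriv]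
      have h1y : (0:ℝ) < 1 + y := by linarith [hy.le]
      rw [sub_nonneg, div_le_iff₀ h1y]
      nlinarith [pow_nonneg hy.le 3]
  have h := hmono (Set.self_mem_Ici) (Set.mem_Ici.mpr hx) hx
  simp only [Real.log_one] at h
  norm_num at h
  linarith

lemma key_log (m : ℕ) (hm : m ≠ 0) :
    (m:ℝ) * Real.log (1 + 1/(2*(m:ℝ))) ≤ 1/2 - 1/(12*(m:ℝ)) := by
  have hm1 : (1:ℝ) ≤ (m:ℝ) := by exact_mod_cast Nat.one_le_iff_ne_zero.mpr hm
  have hm0 : (0:ℝ) < (m:ℝ) := by linarith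
  set x : ℝ := 1/(2*(m:ℝ)) with hxd
  have hx0 : 0 ≤ x := by positivity
  have h := log_cubic hx0
  have hb : (m:ℝ) * (x - x^2/2 + x^3/3) ≤ 1/2 - 1/(12*(m:ℝ)) := by
    have he : (m:ℝ) * (x - x^2/2 + x^3/3) = 1/2 - 1/(8*(m:ℝ)) + 1/(24*(m:ℝ)^2) := by
      rw [hxd]; field_simp; ring
    rw [he]
    have hineq : (0:ℝ) ≤ (1/(8*(m:ℝ)) - 1/(12*(m:ℝ))) - 1/(24*(m:ℝ)^2) := by
      have e : (1/(8*(m:ℝ)) - 1/(12*(m:ℝ))) - 1/(24*(m:ℝ)^2) = ((m:ℝ)-1)/(24*(m:ℝ)^2) := by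
        field_simp; ring
      rw [e]
      exact div_nonneg (by linarith) (by positivity)
    linarith
  calc (m:ℝ) * Real.log (1 + x) ≤ (m:ℝ) * (x - x^2/2 + x^3/3) :=
        mul_le_mul_of_nonneg_left h (le_of_lt hm0)
    _ ≤ _ := hb

lemma gamma_lower_even (m : ℕ) (hm : m ≠ 0) :
    Real.sqrt (2*π) * ((m:ℝ)) ^ (((2*m:ℝ)-1)/2) * Real.exp (-((m:ℝ))) ≤ Real.Gamma (m:ℝ) := by
  have hm0 : (0:ℝ) < m := by exact_mod_cast Nat.pos_of_ne_zero hm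
  set s : ℝ := Real.sqrt (m:ℝ) with hs
  have hs0 : 0 < s := Real.sqrt_pos.mpr hm0
  have hss : s * s = (m:ℝ) := Real.mul_self_sqrt hm0.le
  -- rewrite the rpow
  have hrpow : ((m:ℝ)) ^ (((2*m:ℝ)-1)/2) = (m:ℝ)^m / s := by
    have : ((2*m:ℝ)-1)/2 = (m:ℕ) - (1/2 : ℝ) := by push_cast; ring
    rw [this, Real.rpow_sub hm0, Real.rpow_natCast, ← Real.sqrt_eq_rpow, ← hs]
  -- Gamma m = (m-1)!
  obtain ⟨l, rfl⟩ : ∃ l, m = l + 1 := ⟨m - 1, (Nat.succ_pred_eq_of_pos (Nat.pos_of_ne_zero hm)).symm⟩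
  have hGamma : Real.Gamma ((l+1 : ℕ) : ℝ) = (l ! : ℝ) := by
    push_cast
    exact Real.Gamma_nat_eq_factorial l
  rw [hGamma, hrpow]
  have hfac := factorial_ge (l+1) (Nat.succ_ne_zero l)
  have hcast : ((l+1)! : ℝ) = ((l+1 : ℕ) : ℝ) * (l ! : ℝ) := by
    rw [Nat.factorial_succ]; push_cast; ring
  rw [hcast] at hfac
  -- identity: sqrt(2π) * (m^m / s) * exp(-m) = (√π * (√(2m) * (m/e)^m)) / m
  have hid : Real.sqrt (2*π) * ((((l+1:ℕ)):ℝ)^(l+1) / s) * Real.exp (-(((l+1:ℕ)):ℝ))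
      = Real.sqrt π * (Real.sqrt (2*((l+1:ℕ)):ℝ) * ((((l+1:ℕ)):ℝ)/Real.exp 1)^(l+1)) / (((l+1:ℕ)):ℝ) := by
    have h1 : Real.sqrt (2*π) = Real.sqrt 2 * Real.sqrt π := Real.sqrt_mul (by norm_num) _
    have h2 : Real.sqrt (2*((l+1:ℕ)):ℝ) = Real.sqrt 2 * s := by
      rw [hs]; exact Real.sqrt_mul (by norm_num) _
    have h3 : ((((l+1:ℕ)):ℝ)/Real.exp 1)^(l+1) = (((l+1:ℕ)):ℝ)^(l+1) * Real.exp (-(((l+1:ℕ)):ℝ)) := by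
      rw [div_pow, Real.exp_one_pow, Real.exp_neg]
      ring
    rw [h1, h2, h3, ← hss]
    field_simp
  rw [hid]
  rw [div_le_iff₀ hm0]
  calc Real.sqrt π * (Real.sqrt (2*((l+1:ℕ)):ℝ) * ((((l+1:ℕ)):ℝ)/Real.exp 1)^(l+1))
      ≤ ((l+1:ℕ):ℝ) * (l ! : ℝ) := hfac
    _ = (l ! : ℝ) * ((l+1:ℕ):ℝ) := by ring

lemma gamma_lower_odd (m : ℕ) (hm : m ≠ 0) :
    Real.sqrt (2*π) * ((m:ℝ) + 1/2) ^ (m:ℕ) * Real.exp (-((m:ℝ) + 1/2))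
      ≤ Real.Gamma ((m:ℝ) + 1/2) := by
  have hm0 : (0:ℝ) < m := by exact_mod_cast Nat.pos_of_ne_zero hm
  set s : ℝ := Real.sqrt (m:ℝ) with hs
  have hs0 : 0 < s := Real.sqrt_pos.mpr hm0
  have hss : s * s = (m:ℝ) := Real.mul_self_sqrt hm0.le
  have h2 : Real.sqrt 2 * Real.sqrt 2 = 2 := Real.mul_self_sqrt (by norm_num)
  rw [Gamma_half m]
  set ε : ℝ := 1/(12*(m:ℝ)) with hε
  have hpow : ((m:ℝ) + 1/2)^(m:ℕ) ≤ (m:ℝ)^(m:ℕ) * Real.exp (1/2 - ε) := by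
    have hsplit : ((m:ℝ) + 1/2) = (m:ℝ) * (1 + 1/(2*(m:ℝ))) := by field_simp
    rw [hsplit, mul_pow]
    have hlog : (1 + 1/(2*(m:ℝ)))^(m:ℕ) = Real.exp ((m:ℝ) * Real.log (1 + 1/(2*(m:ℝ)))) := by
      rw [← Real.log_pow, Real.exp_log (by positivity)]
    rw [hlog]
    exact mul_le_mul_of_nonneg_left (Real.exp_le_exp.mpr (key_log m hm)) (by positivity)
  have step1 : Real.sqrt (2*π) * ((m:ℝ) + 1/2) ^ (m:ℕ) * Real.exp (-((m:ℝ) + 1/2))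
      ≤ Real.sqrt (2*π) * ((m:ℝ)^(m:ℕ) * Real.exp (1/2 - ε)) * Real.exp (-((m:ℝ) + 1/2)) := by
    have h1 : (0:ℝ) ≤ Real.sqrt (2*π) := Real.sqrt_nonneg _
    have h3 : (0:ℝ) ≤ Real.exp (-((m:ℝ) + 1/2)) := (Real.exp_pos _).le
    exact mul_le_mul_of_nonneg_right (mul_le_mul_of_nonneg_left hpow h1) h3
  refine step1.trans ?_
  have hden : (0:ℝ) < (4:ℝ)^m * (m ! : ℝ) := by positivity
  rw [div_mul_eq_mul_div, le_div_iff₀ hden]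
  -- abbreviations
  have hA := factorial_ge (2*m) (by omega)
  have hB := factorial_le m hm
  set M : ℝ := (m:ℝ)^(m:ℕ) with hM
  set E : ℝ := Real.exp (-(m:ℝ)) with hE
  have hE0 : 0 < E := Real.exp_pos _
  have hMpos : 0 < M := by rw [hM]; positivity
  have hEm : ((m:ℝ)/Real.exp 1)^(m:ℕ) = M * E := by
    rw [hM, hE, div_pow, Real.exp_one_pow, Real.exp_neg]
    ring
  have hE2m : (((2*m:ℕ):ℝ)/Real.exp 1)^(2*m) = 4^m * (M*E)^2 := by
    have hc : ((2*m:ℕ):ℝ)/Real.exp 1 = 2 * ((m:ℝ)/Real.exp 1) := by push_cast; ring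
    rw [hc, mul_pow, pow_mul, mul_comm 2 m, pow_mul, hEm]
    norm_num
  have h2pi : Real.sqrt (2*π) = Real.sqrt 2 * Real.sqrt π := Real.sqrt_mul (by norm_num) _
  have hsq2m : Real.sqrt (2*(m:ℝ)) = Real.sqrt 2 * s := by
    rw [hs]; exact Real.sqrt_mul (by norm_num) _
  have hsq4m : Real.sqrt (2*((2*m:ℕ):ℝ)) = 2*s := by
    have he : (2*((2*m:ℕ):ℝ)) = (2*s)^2 := by push_cast; linear_combination (-4)*hss
    rw [he, Real.sqrt_sq (by positivity)]
  calc Real.sqrt (2*π) * (M * Real.exp (1/2 - ε)) * Real.exp (-((m:ℝ) + 1/2)) * ((4:ℝ)^m * (m ! : ℝ))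
      ≤ Real.sqrt (2*π) * (M * Real.exp (1/2 - ε)) * Real.exp (-((m:ℝ) + 1/2)) *
          ((4:ℝ)^m * (Real.sqrt π * Real.exp ε * (Real.sqrt (2*(m:ℝ)) * ((m:ℝ)/Real.exp 1)^(m:ℕ)))) := by
        have hnn : (0:ℝ) ≤ Real.sqrt (2*π) * (M * Real.exp (1/2 - ε)) * Real.exp (-((m:ℝ) + 1/2)) * (4:ℝ)^m := by positivity
        calc Real.sqrt (2*π) * (M * Real.exp (1/2 - ε)) * Real.exp (-((m:ℝ) + 1/2)) * ((4:ℝ)^m * (m ! : ℝ))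
            = (Real.sqrt (2*π) * (M * Real.exp (1/2 - ε)) * Real.exp (-((m:ℝ) + 1/2)) * (4:ℝ)^m) * (m ! : ℝ) := by ring
          _ ≤ (Real.sqrt (2*π) * (M * Real.exp (1/2 - ε)) * Real.exp (-((m:ℝ) + 1/2)) * (4:ℝ)^m) *
              (Real.sqrt π * Real.exp ε * (Real.sqrt (2*(m:ℝ)) * ((m:ℝ)/Real.exp 1)^(m:ℕ))) :=
            mul_le_mul_of_nonneg_left hB hnn
          _ = _ := by ring
    _ = Real.sqrt π * (Real.sqrt π * (Real.sqrt (2*((2*m:ℕ):ℝ)) * (((2*m:ℕ):ℝ)/Real.exp 1)^(2*m))) := by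
        rw [h2pi, hsq2m, hsq4m, hEm, hE2m]
        have hexp : Real.exp (1/2 - ε) * Real.exp (-((m:ℝ) + 1/2)) * Real.exp ε = E := by
          rw [hE, ← Real.exp_add, ← Real.exp_add]; congr 1; ring
        linear_combination (Real.sqrt 2 * Real.sqrt 2 * Real.sqrt π^2 * 4^m * s * M^2 * E) * hexp
          + (Real.sqrt π^2 * 4^m * s * M^2 * E^2) * h2
    _ ≤ Real.sqrt π * ((2*m)! : ℝ) := mul_le_mul_of_nonneg_left hA (Real.sqrt_nonneg π)
    _ = ((2*m)! : ℝ) * Real.sqrt π := mul_comm _ _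

lemma gamma_lower (k : ℕ) (hk : 2 ≤ k) :
    Real.sqrt (2*π) * ((k:ℝ)/2) ^ (((k:ℝ)-1)/2) * Real.exp (-((k:ℝ)/2))
      ≤ Real.Gamma ((k:ℝ)/2) := by
  rcases Nat.even_or_odd k with ⟨m, hkm⟩ | ⟨m, hkm⟩
  · have hm : m ≠ 0 := by omega
    have hcast : (k:ℝ) = 2*(m:ℝ) := by rw [hkm]; push_cast; ring
    have h1 : (k:ℝ)/2 = (m:ℝ) := by rw [hcast]; ring
    have h2 : ((k:ℝ)-1)/2 = ((2*m:ℝ)-1)/2 := by rw [hcast]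
    rw [h1, h2]
    exact gamma_lower_even m hm
  · have hm : m ≠ 0 := by omega
    have hcast : (k:ℝ) = 2*(m:ℝ)+1 := by rw [hkm]; push_cast; ring
    have h1 : (k:ℝ)/2 = (m:ℝ) + 1/2 := by rw [hcast]; ring
    have h2 : ((k:ℝ)-1)/2 = ((m:ℕ):ℝ) := by rw [hcast]; ring
    rw [h1, h2, Real.rpow_natCast]
    exact gamma_lower_odd m hm

lemma integral_exp_tail {c : ℝ} (a : ℝ) (hc : 0 < c) :
    ∫ t in Set.Ioi a, Real.exp (-(c*t)) = Real.exp (-(c*a))/c := by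
  have hd : ∀ x ∈ Set.Ici a, HasDerivAt (fun t => -Real.exp (-(c*t))/c) (Real.exp (-(c*x))) x := by
    intro x _
    have h1 : HasDerivAt (fun t : ℝ => -(c*t)) (-c) x := by
      simpa using (hasDerivAt_id x).const_mul (-c)
    have h2 := (h1.exp).neg.div_const c
    rw [mul_neg, neg_neg, mul_div_assoc, div_self hc.ne', mul_one] at h2
    exact h2
  have hint : MeasureTheory.IntegrableOn (fun t => Real.exp (-(c*t))) (Set.Ioi a) := by
    simpa [neg_mul] using exp_neg_integrableOn_Ioi a hc
  have htend : Filter.Tendsto (fun t : ℝ => -Real.exp (-(c*t))/c) Filter.atTop (nhds 0) := by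
    have hb : Filter.Tendsto (fun t : ℝ => -(c*t)) Filter.atTop Filter.atBot :=
      tendsto_neg_atTop_atBot.comp (tendsto_id.const_mul_atTop hc)
    simpa using ((Real.tendsto_exp_atBot.comp hb).neg.div_const c)
  rw [MeasureTheory.integral_Ioi_of_hasDerivAt_of_tendsto' hd hint htend]
  rw [zero_sub, neg_div, neg_neg]

/-- Inglot's upper bound on the chi-square tail: for `k ≥ 2` and `r > k - 2`,
`Q_k(r) ≤ (1/√π) · (r/(r − k + 2)) · E_k(r)` where
`E_k(r) = exp(−(1/2)·[r − k − (k − 2)·log(r/k) + log k])`. -/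
theorem inglot_upper_bound (k : ℕ) (hk : 2 ≤ k) (r : ℝ) (hr : (k : ℝ) - 2 < r) :
    chiSqTail k r
      ≤ (1 / Real.sqrt π) * (r / (r - k + 2)) *
        Real.exp (-(1 / 2) *
          (r - k - ((k : ℝ) - 2) * Real.log (r / k) + Real.log k)) := by
  have hk2 : (2:ℝ) ≤ (k:ℝ) := by exact_mod_cast hk
  have hk0 : (0:ℝ) < (k:ℝ) := by linarith
  have hr0 : (0:ℝ) < r := by linarith
  have hrk : (0:ℝ) < r - (k:ℝ) + 2 := by linarith
  set ν : ℝ := (k:ℝ)/2 - 1 with hν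
  have hν0 : 0 ≤ ν := by rw [hν]; linarith
  set c : ℝ := (r - (k:ℝ) + 2)/(2*r) with hc
  have hc0 : 0 < c := by rw [hc]; positivity
  set D : ℝ := 2 ^ ((k:ℝ)/2) * Real.Gamma ((k:ℝ)/2) with hD
  have hΓ0 : 0 < Real.Gamma ((k:ℝ)/2) := Real.Gamma_pos_of_pos (by positivity)
  have hD0 : 0 < D := by rw [hD]; positivity
  -- rewrite the tail as integral over Ioi r divided by D
  have hmax : max r 0 = r := max_eq_left hr0.le
  have htail : chiSqTail k r = (∫ t in Set.Ioi r, t ^ ν * Real.exp (-t/2)) / D := by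
    rw [chiSqTail, hmax, ← MeasureTheory.integral_div]
    rfl
  -- pointwise bound
  set A : ℝ := r ^ ν * Real.exp (c*r - r/2) with hA
  have hA0 : 0 < A := by rw [hA]; positivity
  have hpt : ∀ t ∈ Set.Ioi r, t ^ ν * Real.exp (-t/2) ≤ A * Real.exp (-(c*t)) := by
    intro t ht
    have htr : r < t := ht
    have ht0 : 0 < t := lt_trans hr0 htr
    have hdiv : 0 < t/r := by positivity
    have h1 : t ^ ν = r ^ ν * Real.exp (Real.log (t/r) * ν) := by
      rw [← Real.rpow_def_of_pos hdiv, ← Real.mul_rpow hr0.le (le_of_lt hdiv),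
        mul_div_cancel₀ _ hr0.ne']
    have h2 : Real.log (t/r) * ν ≤ (t/r - 1) * ν :=
      mul_le_mul_of_nonneg_right (Real.log_le_sub_one_of_pos hdiv) hν0
    have h3 : t ^ ν * Real.exp (-t/2) ≤ r ^ ν * Real.exp ((t/r - 1) * ν - t/2) := by
      rw [h1, mul_assoc, ← Real.exp_add]
      refine mul_le_mul_of_nonneg_left (Real.exp_le_exp.mpr ?_) (by positivity)
      linarith
    refine h3.trans (le_of_eq ?_)
    rw [hA, mul_assoc, ← Real.exp_add]
    congr 1
    rw [hν, hc]
    field_simp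
    ring
  -- integrability
  have hgint : MeasureTheory.IntegrableOn (fun t => A * Real.exp (-(c*t))) (Set.Ioi r) := by
    have := exp_neg_integrableOn_Ioi r hc0
    simpa [neg_mul, IntegrableOn] using this.const_mul A
  have hfmeas : MeasureTheory.AEStronglyMeasurable (fun t : ℝ => t ^ ν * Real.exp (-t/2))
      (MeasureTheory.volume.restrict (Set.Ioi r)) := by
    apply Measurable.aestronglyMeasurable
    exact (measurable_id.pow_const ν).mul (Real.measurable_exp.comp (measurable_id.neg.div_const 2))
  have hfint : MeasureTheory.IntegrableOn (fun t => t ^ ν * Real.exp (-t/2)) (Set.Ioi r) := by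
    apply hgint.mono' hfmeas
    filter_upwards [MeasureTheory.ae_restrict_mem measurableSet_Ioi] with t ht
    have ht0 : 0 < t := lt_trans hr0 ht
    rw [Real.norm_eq_abs, abs_of_nonneg (by positivity)]
    exact hpt t ht
  have hIle : (∫ t in Set.Ioi r, t ^ ν * Real.exp (-t/2)) ≤ r ^ ν * Real.exp (-r/2) / c := by
    calc (∫ t in Set.Ioi r, t ^ ν * Real.exp (-t/2))
        ≤ ∫ t in Set.Ioi r, A * Real.exp (-(c*t)) :=
          MeasureTheory.setIntegral_mono_on hfint hgint measurableSet_Ioi hpt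
      _ = A * (Real.exp (-(c*r))/c) := by
          rw [MeasureTheory.integral_const_mul, integral_exp_tail r hc0]
      _ = r ^ ν * Real.exp (-r/2) / c := by
          rw [hA, mul_assoc, ← mul_div_assoc, ← Real.exp_add,
            show c*r - r/2 + -(c*r) = -r/2 by ring, ← mul_div_assoc]
  -- final comparison
  rw [htail]
  have hstep : (∫ t in Set.Ioi r, t ^ ν * Real.exp (-t/2)) / D
      ≤ (r ^ ν * Real.exp (-r/2) / c) / D := by gcongr
  refine hstep.trans ?_
  have hExp : Real.exp (-(1/2) * (r - (k:ℝ) - ((k:ℝ)-2)*Real.log (r/(k:ℝ)) + Real.log (k:ℝ)))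
      = Real.exp (-r/2) * Real.exp ((k:ℝ)/2) * (r/(k:ℝ))^ν * ((k:ℝ))^(-(1/2):ℝ) := by
    rw [Real.rpow_def_of_pos (by positivity : (0:ℝ) < r/(k:ℝ)), Real.rpow_def_of_pos hk0,
      ← Real.exp_add, ← Real.exp_add, ← Real.exp_add]
    congr 1
    rw [hν]; ring
  rw [hExp]
  have hb2 : (2:ℝ)^((1/2):ℝ) * (2:ℝ)^((1/2):ℝ) = 2 := by
    rw [← Real.rpow_add (by norm_num : (0:ℝ) < 2)]; norm_num
  have H : 2 * Real.sqrt π * ((k:ℝ)^ν * (k:ℝ)^((1/2):ℝ)) * Real.exp (-((k:ℝ)/2)) ≤ D := by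
    have hsplit : ((k:ℝ)/2)^(((k:ℝ)-1)/2) = (k:ℝ)^(((k:ℝ)-1)/2) / (2:ℝ)^(((k:ℝ)-1)/2) :=
      Real.div_rpow hk0.le zero_le_two _
    have hksplit : (k:ℝ)^(((k:ℝ)-1)/2) = (k:ℝ)^ν * (k:ℝ)^((1/2):ℝ) := by
      rw [← Real.rpow_add hk0]; congr 1; rw [hν]; ring
    have h2pi : Real.sqrt (2*π) = (2:ℝ)^((1/2):ℝ) * Real.sqrt π := by
      rw [Real.sqrt_mul (by norm_num), Real.sqrt_eq_rpow]
    have hpow2 : (2:ℝ)^((k:ℝ)/2) = (2:ℝ)^(((k:ℝ)-1)/2) * (2:ℝ)^((1/2):ℝ) := by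
      rw [← Real.rpow_add (by norm_num : (0:ℝ) < 2)]; congr 1; ring
    have ha0 : (0:ℝ) < (2:ℝ)^(((k:ℝ)-1)/2) := Real.rpow_pos_of_pos (by norm_num) _
    have hid : 2 * Real.sqrt π * ((k:ℝ)^ν * (k:ℝ)^((1/2):ℝ)) * Real.exp (-((k:ℝ)/2))
        = 2^((k:ℝ)/2) * (Real.sqrt (2*π) * ((k:ℝ)/2)^(((k:ℝ)-1)/2) * Real.exp (-((k:ℝ)/2))) := by
      rw [hsplit, hksplit, h2pi, hpow2]
      have h1 : (2:ℝ)^(((k:ℝ)-1)/2) * ((2:ℝ)^(((k:ℝ)-1)/2))⁻¹ = 1 := mul_inv_cancel₀ ha0.ne'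
      linear_combination (- (Real.sqrt π * ((k:ℝ)^ν * (k:ℝ)^((1/2):ℝ)) * Real.exp (-((k:ℝ)/2))
          * ((2:ℝ)^((1/2):ℝ) * (2:ℝ)^((1/2):ℝ)))) * h1
        + (- (Real.sqrt π * ((k:ℝ)^ν * (k:ℝ)^((1/2):ℝ)) * Real.exp (-((k:ℝ)/2)))) * hb2
    rw [hid, hD]
    exact mul_le_mul_of_nonneg_left (gamma_lower k hk) (by positivity)
  have hsπ : (0:ℝ) < Real.sqrt π := Real.sqrt_pos.mpr Real.pi_pos
  have hrν : (0:ℝ) < r ^ ν := Real.rpow_pos_of_pos hr0 _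
  have hkν : (0:ℝ) < (k:ℝ) ^ ν := Real.rpow_pos_of_pos hk0 _
  have hkh : (0:ℝ) < (k:ℝ) ^ ((1/2):ℝ) := Real.rpow_pos_of_pos hk0 _
  set Q : ℝ := (1 / Real.sqrt π) * (r / (r - (k:ℝ) + 2)) *
      (Real.exp (-r/2) * Real.exp ((k:ℝ)/2) * (r/(k:ℝ))^ν * ((k:ℝ))^(-(1/2):ℝ)) with hQ
  have hQ0 : 0 ≤ Q := by
    rw [hQ]
    positivity
  calc (r ^ ν * Real.exp (-r/2) / c) / D
      = Q * (2 * Real.sqrt π * ((k:ℝ)^ν * (k:ℝ)^((1/2):ℝ)) * Real.exp (-((k:ℝ)/2))) / D := by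
        rw [hQ, Real.rpow_neg hk0.le, Real.exp_neg, Real.div_rpow hr0.le hk0.le _]
        congr 1
        rw [hc, div_div_eq_mul_div]
        field_simp
    _ ≤ Q * D / D := by
        apply div_le_div_of_nonneg_right ?_ ?_
        · exact mul_le_mul_of_nonneg_left H hQ0
        · exact hD0.le
    _ = Q := by field_simp
    _ = _ := by rw [hQ]
end

section
/- With m = 2 transmissions, for every real u with 0 ≤ u < 1/2, the joint error probability satisfies P(ζ_1 ∩ ζ_2) ≤ e^{−u r_2²} · Q_{I_1}((1 − 2u) r_1²) / (1 − 2u)^{N_2/2}; consequently P(ζ_1 ∩ ζ_2) ≤ inf_{0 ≤ u < 1/2} e^{−u r_2²} · Q_{I_1}((1 − 2u) r_1²) / (1 − 2u)^{N_2/2}. (Chernoff upper bound of Lemma 1.) -/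
open MeasureTheory ProbabilityTheory Real Set
open scoped ENNReal NNReal

section AuxLemmas

lemma aux_map_pi {Ω : Type*} [MeasureSpace Ω] {Z : ℕ → Ω → ℝ}
    (hmeas : ∀ i, Measurable (Z i))
    (hindep : iIndepFun Z ℙ)
    (hlaw : ∀ i, Measure.map (Z i) ℙ = gaussianReal 0 1) (k : ℕ) :
    Measure.map (fun ω (i : Fin k) => Z i ω) ℙ
      = Measure.pi (fun _ : Fin k => gaussianReal 0 1) := by
  refine (Measure.pi_eq fun s hs => ?_).symm
  have hV : Measurable (fun ω (i : Fin k) => Z i ω) :=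
    measurable_pi_lambda _ fun i => hmeas i
  rw [Measure.map_apply hV (MeasurableSet.univ_pi hs)]
  classical
  set t : ℕ → Set ℝ := fun n => if h : n < k then s ⟨n, h⟩ else univ with ht
  have hpre : (fun ω (i : Fin k) => Z i ω) ⁻¹' (Set.pi univ s)
      = ⋂ i ∈ Finset.range k, Z i ⁻¹' t i := by
    ext ω
    simp only [Set.mem_preimage, Set.mem_univ_pi, Set.mem_iInter, Finset.mem_range]
    constructor
    · intro h n hn
      simp only [ht, dif_pos hn, Set.mem_preimage]
      exact h ⟨n, hn⟩
    · intro h i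
      have := h i i.isLt
      simpa only [ht, dif_pos i.isLt, Set.mem_preimage, Fin.eta] using this
  rw [hpre, hindep.measure_inter_preimage_eq_mul (Finset.range k)
    (fun i hi => ?_)]
  · rw [← Fin.prod_univ_eq_prod_range (fun n => ℙ (Z n ⁻¹' t n)) k]
    refine Finset.prod_congr rfl fun i _ => ?_
    rw [← Measure.map_apply (hmeas i) (by simpa [ht, i.isLt] using hs i), hlaw]
    congr 1
    simp [ht, i.isLt]
  · rw [Finset.mem_range] at hi
    simpa [ht, hi] using hs ⟨i, hi⟩

lemma aux_pi_gaussian (k : ℕ) :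
    Measure.pi (fun _ : Fin k => gaussianReal 0 1)
      = (volume : Measure (Fin k → ℝ)).withDensity
          (fun x => ENNReal.ofReal (∏ i, gaussianPDFReal 0 1 (x i))) := by
  refine Measure.pi_eq fun s hs => ?_
  rw [withDensity_apply _ (MeasurableSet.univ_pi hs),
    ← lintegral_indicator (MeasurableSet.univ_pi hs)]
  have hind : ∀ x : Fin k → ℝ,
      (Set.pi univ s).indicator
          (fun x => ENNReal.ofReal (∏ i, gaussianPDFReal 0 1 (x i))) x
        = ENNReal.ofReal (∏ i, (s i).indicator (gaussianPDFReal 0 1) (x i)) := by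
    intro x
    by_cases hx : x ∈ Set.pi univ s
    · rw [Set.indicator_of_mem hx]
      congr 1
      exact Finset.prod_congr rfl fun i _ =>
        (Set.indicator_of_mem (hx i (Set.mem_univ i)) _).symm
    · rw [Set.indicator_of_notMem hx]
      have : ∃ i, x i ∉ s i := by
        by_contra h
        push_neg at h
        exact hx fun i _ => h i
      obtain ⟨i, hi⟩ := this
      rw [Finset.prod_eq_zero (Finset.mem_univ i)
        (by rw [Set.indicator_of_notMem hi]), ENNReal.ofReal_zero]
  simp only [hind]
  have hint : Integrable (fun x : Fin k → ℝ =>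
      ∏ i, (s i).indicator (gaussianPDFReal 0 1) (x i)) :=
    Integrable.fintype_prod fun i => (integrable_gaussianPDFReal 0 1).indicator (hs i)
  rw [← ofReal_integral_eq_lintegral_ofReal hint (ae_of_all _ fun x =>
    Finset.prod_nonneg fun i _ => Set.indicator_nonneg
      (fun y _ => gaussianPDFReal_nonneg 0 1 y) _)]
  rw [MeasureTheory.integral_fintype_prod_volume_eq_prod (𝕜 := ℝ)
    (f := fun _ : Fin k => (s _).indicator (gaussianPDFReal 0 1))]
  rw [ENNReal.ofReal_prod_of_nonneg (fun i _ => integral_nonneg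
    (Set.indicator_nonneg fun y _ => gaussianPDFReal_nonneg 0 1 y))]
  refine Finset.prod_congr rfl fun i _ => ?_
  rw [gaussianReal_apply_eq_integral 0 one_ne_zero (s i),
    integral_indicator (hs i)]

lemma aux_const {k : ℕ} (hk : 0 < k) :
    (k : ℝ) * (Real.sqrt π ^ k / Real.Gamma ((k:ℝ)/2 + 1)) * (((Real.sqrt (2*π))⁻¹)^k / 2)
      = 1 / (2 ^ ((k:ℝ)/2) * Real.Gamma ((k:ℝ)/2)) := by
  have hk2 : ((k:ℝ)/2) ≠ 0 := by positivity
  have hΓ : Real.Gamma ((k:ℝ)/2 + 1) = ((k:ℝ)/2) * Real.Gamma ((k:ℝ)/2) :=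
    Real.Gamma_add_one hk2
  have hΓpos : 0 < Real.Gamma ((k:ℝ)/2) := Real.Gamma_pos_of_pos (by positivity)
  have hsqrt : Real.sqrt (2*π) = Real.sqrt 2 * Real.sqrt π :=
    Real.sqrt_mul (by norm_num) _
  have h2k : (Real.sqrt 2) ^ k = 2 ^ ((k:ℝ)/2) := by
    rw [Real.sqrt_eq_rpow, ← Real.rpow_natCast ((2:ℝ) ^ ((1:ℝ)/2)) k,
      ← Real.rpow_mul (by norm_num)]
    ring_nf
  have hπpos : (0:ℝ) < Real.sqrt π := Real.sqrt_pos.mpr Real.pi_pos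
  have h2pos : (0:ℝ) < 2 ^ ((k:ℝ)/2) := Real.rpow_pos_of_pos (by norm_num) _
  rw [hΓ, hsqrt, mul_inv, mul_pow, inv_pow, inv_pow, h2k]
  have hkpos : (0:ℝ) < k := Nat.cast_pos.mpr hk
  field_simp

lemma aux_mgf_sq_gaussian {u : ℝ} (hu : u < 1/2) :
    Integrable (fun x => Real.exp (u * x^2)) (gaussianReal 0 1)
      ∧ ∫ x, Real.exp (u * x^2) ∂(gaussianReal 0 1) = (Real.sqrt (1 - 2*u))⁻¹ := by
  have hb : (0:ℝ) < 1/2 - u := by linarith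
  have hgm : Measurable (fun x : ℝ => (gaussianPDFReal 0 1 x).toNNReal) :=
    (measurable_gaussianPDFReal 0 1).real_toNNReal
  have hrw : gaussianReal 0 1 = (volume : Measure ℝ).withDensity
      (fun x => ((gaussianPDFReal 0 1 x).toNNReal : ℝ≥0∞)) := by
    rw [gaussianReal_of_var_ne_zero 0 one_ne_zero]
    rfl
  have hfun : (fun x : ℝ => ((gaussianPDFReal 0 1 x).toNNReal : ℝ≥0)
        • Real.exp (u * x^2))
      = fun x => (Real.sqrt (2*π))⁻¹ * Real.exp (-(1/2 - u) * x^2) := by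
    funext x
    rw [NNReal.smul_def, Real.coe_toNNReal _ (gaussianPDFReal_nonneg 0 1 x), smul_eq_mul]
    simp only [gaussianPDFReal, NNReal.coe_one, mul_one, sub_zero]
    rw [mul_assoc, ← Real.exp_add]
    congr 2
    ring
  constructor
  · rw [hrw, integrable_withDensity_iff_integrable_smul hgm, hfun]
    exact (integrable_exp_neg_mul_sq hb).const_mul _
  · rw [hrw, integral_withDensity_eq_integral_smul hgm, hfun,
      MeasureTheory.integral_const_mul, integral_gaussian,
      show π / (1/2 - u) = (2*π) / (1 - 2*u) by rw [div_eq_div_iff (by linarith) (by linarith)]; ring,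
      Real.sqrt_div (by positivity : (0:ℝ) ≤ 2*π)]
    have h2π : Real.sqrt (2*π) ≠ 0 := by positivity
    field_simp

lemma aux_chi_expectation {Ω : Type*} [MeasureSpace Ω] [IsProbabilityMeasure (ℙ : Measure Ω)]
    {Z : ℕ → Ω → ℝ} (hmeas : ∀ i, Measurable (Z i))
    (hindep : iIndepFun Z ℙ)
    (hlaw : ∀ i, Measure.map (Z i) ℙ = gaussianReal 0 1)
    {k : ℕ} (hk : 0 < k) {g : ℝ → ℝ} (hg : Measurable g) :
    ∫ ω, g (∑ j ∈ Finset.range k, Z j ω ^ 2) ∂ℙ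
      = ∫ t in Ioi (0:ℝ), g t * chiSqPDF k t := by
  haveI : Nonempty (Fin k) := ⟨⟨0, hk⟩⟩
  -- Step 1: rewrite the sum over `range k` as a sum over `Fin k`
  have hsum : ∀ ω, ∑ j ∈ Finset.range k, Z j ω ^ 2 = ∑ i : Fin k, Z i ω ^ 2 :=
    fun ω => (Fin.sum_univ_eq_sum_range (fun j => Z j ω ^ 2) k).symm
  simp only [hsum]
  -- Step 2: push to the product space
  have hV : Measurable (fun ω (i : Fin k) => Z i ω) :=
    measurable_pi_lambda _ fun i => hmeas i
  have hG : Measurable (fun x : Fin k → ℝ => g (∑ i, x i ^ 2)) :=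
    hg.comp (by measurability)
  have step2 : ∫ ω, g (∑ i : Fin k, Z i ω ^ 2) ∂ℙ
      = ∫ x : Fin k → ℝ, g (∑ i, x i ^ 2)
          ∂((volume : Measure (Fin k → ℝ)).withDensity
            (fun x => ENNReal.ofReal (∏ i, gaussianPDFReal 0 1 (x i)))) := by
    rw [← aux_pi_gaussian, ← aux_map_pi hmeas hindep hlaw k,
      integral_map hV.aemeasurable hG.aestronglyMeasurable]
  rw [step2]
  -- Step 3: withDensity to weighted integral
  have hp : ∀ x : Fin k → ℝ, 0 ≤ ∏ i, gaussianPDFReal 0 1 (x i) :=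
    fun x => Finset.prod_nonneg fun i _ => gaussianPDFReal_nonneg 0 1 _
  have hpm : Measurable (fun x : Fin k → ℝ =>
      (∏ i, gaussianPDFReal 0 1 (x i)).toNNReal) := by
    apply Measurable.real_toNNReal
    exact Finset.measurable_prod _ fun i _ =>
      (measurable_gaussianPDFReal 0 1).comp (measurable_pi_apply i)
  have step3 : ∫ x : Fin k → ℝ, g (∑ i, x i ^ 2)
          ∂((volume : Measure (Fin k → ℝ)).withDensity
            (fun x => ENNReal.ofReal (∏ i, gaussianPDFReal 0 1 (x i))))
      = ∫ x : Fin k → ℝ, (∏ i, gaussianPDFReal 0 1 (x i)) * g (∑ i, x i ^ 2) := by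
    rw [show (fun x : Fin k → ℝ => ENNReal.ofReal (∏ i, gaussianPDFReal 0 1 (x i)))
        = (fun x : Fin k → ℝ =>
            ((∏ i, gaussianPDFReal 0 1 (x i)).toNNReal : ℝ≥0∞)) from rfl,
      integral_withDensity_eq_integral_smul hpm]
    refine integral_congr_ae (ae_of_all _ fun x => ?_)
    simp [NNReal.smul_def, Real.coe_toNNReal _ (hp x)]
  rw [step3]
  -- Step 4: the density is a function of the norm
  set c₀ : ℝ := ((Real.sqrt (2*π))⁻¹)^k with hc₀
  have hprod : ∀ x : Fin k → ℝ,
      (∏ i, gaussianPDFReal 0 1 (x i)) = c₀ * Real.exp (-(∑ i, x i ^ 2)/2) := by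
    intro x
    have : ∀ i : Fin k, gaussianPDFReal 0 1 (x i)
        = (Real.sqrt (2*π))⁻¹ * Real.exp (-(x i)^2/2) := by
      intro i
      simp [gaussianPDFReal, NNReal.coe_one]
    simp only [this, Finset.prod_mul_distrib, Finset.prod_const, Finset.card_univ,
      Fintype.card_fin, ← Real.exp_sum, hc₀]
    congr 1
    rw [← Finset.sum_div, ← Finset.sum_neg_distrib]
  simp only [hprod]
  -- Step 5: move to Euclidean space
  have step5 : (∫ x : Fin k → ℝ, c₀ * Real.exp (-(∑ i, x i ^ 2)/2) * g (∑ i, x i ^ 2))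
      = ∫ y : EuclideanSpace ℝ (Fin k), c₀ * Real.exp (-(‖y‖^2)/2) * g (‖y‖^2) := by
    rw [← (EuclideanSpace.volume_preserving_symm_measurableEquiv_toLp (Fin k)).integral_comp
        (MeasurableEquiv.toLp 2 (Fin k → ℝ)).symm.measurableEmbedding
        (fun x => c₀ * Real.exp (-(∑ i, x i ^ 2)/2) * g (∑ i, x i ^ 2))]
    refine integral_congr_ae (ae_of_all _ fun y => ?_)
    have hy : ∑ i, ((MeasurableEquiv.toLp 2 (Fin k → ℝ)).symm y) i ^ 2 = ‖y‖^2 := by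
      have h1 : ∀ i, ((MeasurableEquiv.toLp 2 (Fin k → ℝ)).symm y) i = y i := fun i => rfl
      simp only [h1]
      rw [EuclideanSpace.norm_eq, Real.sq_sqrt (Finset.sum_nonneg fun i _ => sq_nonneg _)]
      simp [Real.norm_eq_abs, sq_abs]
    simp only [hy]
  rw [step5]
  -- Step 6: polar coordinates
  haveI : Nontrivial (EuclideanSpace ℝ (Fin k)) := by
    refine ⟨EuclideanSpace.single ⟨0, hk⟩ 1, 0, fun h => ?_⟩
    have := congrArg (fun v => v ⟨0, hk⟩) h
    simp [EuclideanSpace.single_apply] at this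
  have step6 := MeasureTheory.integral_fun_norm_addHaar
    (volume : Measure (EuclideanSpace ℝ (Fin k)))
    (fun r => c₀ * Real.exp (-(r^2)/2) * g (r^2))
  rw [finrank_euclideanSpace_fin] at step6
  rw [step6]
  -- Step 7: volume of the unit ball
  have hΓpos : 0 < Real.Gamma ((k:ℝ)/2 + 1) := Real.Gamma_pos_of_pos (by positivity)
  have hball : ((volume : Measure (EuclideanSpace ℝ (Fin k)))
      (Metric.ball 0 1)).toReal = Real.sqrt π ^ k / Real.Gamma ((k:ℝ)/2 + 1) := by
    rw [EuclideanSpace.volume_ball]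
    simp only [Fintype.card_fin, ENNReal.ofReal_one, one_pow, one_mul]
    rw [ENNReal.toReal_ofReal (by positivity)]
  rw [measureReal_def, hball]
  -- Step 8: substitution t = r^2
  have hsub : (∫ r in Ioi (0:ℝ), r ^ (k-1) • (c₀ * Real.exp (-(r^2)/2) * g (r^2)))
      = ∫ t in Ioi (0:ℝ), (c₀/2) * (t ^ ((k:ℝ)/2 - 1) * Real.exp (-t/2) * g t) := by
    rw [← integral_comp_rpow_Ioi
      (fun t => (c₀/2) * (t ^ ((k:ℝ)/2 - 1) * Real.exp (-t/2) * g t))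
      (by norm_num : (2:ℝ) ≠ 0)]
    refine setIntegral_congr_fun measurableSet_Ioi fun x hx => ?_
    have hx0 : (0:ℝ) < x := hx
    have h2 : x ^ (2:ℝ) = x ^ 2 := by
      rw [show (2:ℝ) = ((2:ℕ):ℝ) by norm_num, Real.rpow_natCast]
    have h3 : (x ^ (2:ℝ)) ^ ((k:ℝ)/2 - 1) = x ^ ((k:ℝ) - 2) := by
      rw [← Real.rpow_mul hx0.le]
      congr 1
      ring
    have h4 : (x:ℝ) ^ (k-1 : ℕ) = x ^ ((k:ℝ) - 1) := by
      rw [← Real.rpow_natCast x (k-1), Nat.cast_sub hk, Nat.cast_one]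
    have h5 : x ^ ((k:ℝ) - 1) = x ^ ((k:ℝ) - 2) * x := by
      rw [show (k:ℝ) - 1 = ((k:ℝ) - 2) + 1 by ring, Real.rpow_add_one hx0.ne']
    simp only [smul_eq_mul]
    rw [h3]
    simp only [h2, h4, h5]
    rw [abs_of_pos (by norm_num : (0:ℝ) < 2)]
    rw [show (2:ℝ) - 1 = 1 by norm_num, Real.rpow_one]
    ring
  rw [hsub, MeasureTheory.integral_const_mul]
  -- Step 9: identify the right-hand side
  have hrhs : (∫ t in Ioi (0:ℝ), g t * chiSqPDF k t)
      = (1 / (2 ^ ((k:ℝ)/2) * Real.Gamma ((k:ℝ)/2)))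
          * ∫ t in Ioi (0:ℝ), t ^ ((k:ℝ)/2 - 1) * Real.exp (-t/2) * g t := by
    rw [← MeasureTheory.integral_const_mul]
    refine setIntegral_congr_fun measurableSet_Ioi fun t _ => ?_
    simp only [chiSqPDF]
    ring
  rw [hrhs]
  rw [nsmul_eq_mul, smul_eq_mul]
  rw [← aux_const hk, hc₀]
  ring

lemma aux_bound {Ω : Type*} [MeasureSpace Ω] [IsProbabilityMeasure (ℙ : Measure Ω)]
    (Z : ℕ → Ω → ℝ) (hmeas : ∀ i, Measurable (Z i))
    (hindep : iIndepFun Z ℙ)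
    (hlaw : ∀ i, Measure.map (Z i) ℙ = gaussianReal 0 1)
    (I₁ I₂ : ℕ) (hI₁ : 0 < I₁) (hI₂ : 0 < I₂)
    (r₁ r₂ : ℝ) (hr₁ : 0 < r₁) (hr₂ : 0 < r₂)
    (u : ℝ) (hu0 : 0 ≤ u) (hu2 : u < 1/2) :
    (ℙ ({ω | r₁ ^ 2 < ∑ j ∈ Finset.range I₁, Z j ω ^ 2} ∩
        {ω | r₂ ^ 2 < ∑ j ∈ Finset.range (I₁ + I₂), Z j ω ^ 2})).toReal
      ≤ Real.exp (-u * r₂ ^ 2) * chiSqTail I₁ ((1 - 2 * u) * r₁ ^ 2) /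
          (1 - 2 * u) ^ (((I₁ + I₂ : ℕ) : ℝ) / 2) := by
  set c : ℝ := 1 - 2*u with hc_def
  have hc : 0 < c := by simp only [hc_def]; linarith
  -- measurability of the partial sums
  have hSm : ∀ n : ℕ, Measurable (fun ω => ∑ j ∈ Finset.range n, Z j ω ^ 2) :=
    fun n => Finset.measurable_sum _ fun j _ => (hmeas j).pow_const 2
  set A : Set Ω := {ω | r₁ ^ 2 < ∑ j ∈ Finset.range I₁, Z j ω ^ 2} with hA_def
  set B : Set Ω := {ω | r₂ ^ 2 < ∑ j ∈ Finset.range (I₁ + I₂), Z j ω ^ 2} with hB_def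
  have hA : MeasurableSet A := measurableSet_lt measurable_const (hSm I₁)
  have hB : MeasurableSet B := measurableSet_lt measurable_const (hSm (I₁ + I₂))
  -- the squares are independent
  have hXm : ∀ j : ℕ, Measurable (fun ω => Z j ω ^ 2) := fun j => (hmeas j).pow_const 2
  have hXindep : iIndepFun (fun j ω => Z j ω ^ 2) ℙ :=
    hindep.comp (fun _ => fun x : ℝ => x ^ 2) (fun _ => measurable_id.pow_const 2)
  -- integrability and value of each exponential moment
  have hXint : ∀ j : ℕ, Integrable (fun ω => Real.exp (u * Z j ω ^ 2)) ℙ := by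
    intro j
    have hgm : Measurable (fun x : ℝ => Real.exp (u * x ^ 2)) :=
      ((measurable_id.pow_const 2).const_mul u).exp
    have h := (aux_mgf_sq_gaussian hu2).1
    rw [← hlaw j] at h
    exact (integrable_map_measure hgm.aestronglyMeasurable (hmeas j).aemeasurable).mp h
  have hXmgf : ∀ j : ℕ, ∫ ω, Real.exp (u * Z j ω ^ 2) ∂ℙ = (Real.sqrt c)⁻¹ := by
    intro j
    have hgm : Measurable (fun x : ℝ => Real.exp (u * x ^ 2)) :=
      ((measurable_id.pow_const 2).const_mul u).exp
    rw [← integral_map (hmeas j).aemeasurable hgm.aestronglyMeasurable, hlaw j]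
    exact (aux_mgf_sq_gaussian hu2).2
  -- integrability of exponentials of partial sums
  have hexpint : ∀ s : Finset ℕ,
      Integrable (fun ω => Real.exp (u * ∑ j ∈ s, Z j ω ^ 2)) ℙ := by
    intro s
    have := hXindep.integrable_exp_mul_sum hXm (s := s) (fun i _ => hXint i)
    simpa [Finset.sum_apply] using this
  -- value of exponential moment over the Ico block
  have hT : ∫ ω, Real.exp (u * ∑ j ∈ Finset.Ico I₁ (I₁ + I₂), Z j ω ^ 2) ∂ℙ
      = (Real.sqrt c)⁻¹ ^ I₂ := by
    have h := hXindep.mgf_sum hXm (Finset.Ico I₁ (I₁ + I₂)) (t := u)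
    simp only [mgf, Finset.sum_apply] at h
    rw [h]
    rw [Finset.prod_congr rfl (fun j _ => hXmgf j), Finset.prod_const, Nat.card_Ico,
      Nat.add_sub_cancel_left]
  -- split the inner integral using independence
  have hsplit : ∀ ω, ∑ j ∈ Finset.range (I₁ + I₂), Z j ω ^ 2
      = (∑ j ∈ Finset.range I₁, Z j ω ^ 2)
        + ∑ j ∈ Finset.Ico I₁ (I₁ + I₂), Z j ω ^ 2 := by
    intro ω
    simp only [Finset.range_eq_Ico]
    exact (Finset.sum_Ico_consecutive _ (Nat.zero_le _) (Nat.le_add_right _ _)).symm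
  have hdisj : Disjoint (Finset.range I₁) (Finset.Ico I₁ (I₁ + I₂)) := by
    refine Finset.disjoint_left.mpr fun a ha hb => ?_
    rw [Finset.mem_range] at ha
    rw [Finset.mem_Ico] at hb
    omega
  -- the two factors
  set F₁ : Ω → ℝ := fun ω => A.indicator
    (fun ω' => Real.exp (u * ∑ j ∈ Finset.range I₁, Z j ω' ^ 2)) ω with hF₁_def
  set F₂ : Ω → ℝ := fun ω =>
    Real.exp (u * ∑ j ∈ Finset.Ico I₁ (I₁ + I₂), Z j ω ^ 2) with hF₂_def
  have hF₁int : Integrable F₁ ℙ := (hexpint (Finset.range I₁)).indicator hA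
  have hF₂int : Integrable F₂ ℙ := hexpint (Finset.Ico I₁ (I₁ + I₂))
  have hindepF : IndepFun F₁ F₂ ℙ := by
    have base := hindep.indepFun_finset (Finset.range I₁) (Finset.Ico I₁ (I₁ + I₂)) hdisj hmeas
    set g₁ : ((i : (Finset.range I₁ : Finset ℕ)) → ℝ) → ℝ := fun v =>
      (Ioi (r₁ ^ 2)).indicator (fun s => Real.exp (u * s)) (∑ i, (v i) ^ 2) with hg₁_def
    set g₂ : ((i : (Finset.Ico I₁ (I₁ + I₂) : Finset ℕ)) → ℝ) → ℝ := fun v =>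
      Real.exp (u * ∑ i, (v i) ^ 2) with hg₂_def
    have hsum₁ : Measurable fun v : ((i : (Finset.range I₁ : Finset ℕ)) → ℝ) =>
        ∑ i, (v i) ^ 2 := Finset.measurable_sum _ fun i _ => (measurable_pi_apply i).pow_const 2
    have hsum₂ : Measurable fun v : ((i : (Finset.Ico I₁ (I₁ + I₂) : Finset ℕ)) → ℝ) =>
        ∑ i, (v i) ^ 2 := Finset.measurable_sum _ fun i _ => (measurable_pi_apply i).pow_const 2
    have hg₁ : Measurable g₁ :=
      (((measurable_id.const_mul u).exp).indicator measurableSet_Ioi).comp hsum₁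
    have hg₂ : Measurable g₂ := (hsum₂.const_mul u).exp
    have hcomp := base.comp hg₁ hg₂
    have e₁ : (g₁ ∘ fun a (i : (Finset.range I₁ : Finset ℕ)) => Z i a) = F₁ := by
      funext a
      simp only [Function.comp_apply, hg₁_def, hF₁_def]
      rw [Finset.sum_coe_sort (Finset.range I₁) (fun j => Z j a ^ 2)]
      by_cases h : a ∈ A
      · rw [Set.indicator_of_mem h, Set.indicator_of_mem (by exact h)]
      · rw [Set.indicator_of_notMem h, Set.indicator_of_notMem (by exact h)]
    have e₂ : (g₂ ∘ fun a (i : (Finset.Ico I₁ (I₁ + I₂) : Finset ℕ)) => Z i a) = F₂ := by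
      funext a
      simp only [Function.comp_apply, hg₂_def, hF₂_def]
      rw [Finset.sum_coe_sort (Finset.Ico I₁ (I₁ + I₂)) (fun j => Z j a ^ 2)]
    rwa [e₁, e₂] at hcomp
  -- independence splitting of the set integral
  have hkey : ∫ ω in A, Real.exp (u * ∑ j ∈ Finset.range (I₁ + I₂), Z j ω ^ 2) ∂ℙ
      = (∫ ω in A, Real.exp (u * ∑ j ∈ Finset.range I₁, Z j ω ^ 2) ∂ℙ)
          * (Real.sqrt c)⁻¹ ^ I₂ := by
    have hptw : ∀ ω, A.indicator
        (fun ω' => Real.exp (u * ∑ j ∈ Finset.range (I₁ + I₂), Z j ω' ^ 2)) ω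
          = F₁ ω * F₂ ω := by
      intro ω
      by_cases h : ω ∈ A
      · rw [Set.indicator_of_mem h]
        simp only [hF₁_def, hF₂_def, Set.indicator_of_mem h]
        rw [hsplit ω, mul_add, Real.exp_add]
      · rw [Set.indicator_of_notMem h]
        simp only [hF₁_def, hF₂_def, Set.indicator_of_notMem h, zero_mul]
    calc ∫ ω in A, Real.exp (u * ∑ j ∈ Finset.range (I₁ + I₂), Z j ω ^ 2) ∂ℙ
        = ∫ ω, A.indicator
            (fun ω' => Real.exp (u * ∑ j ∈ Finset.range (I₁ + I₂), Z j ω' ^ 2)) ω ∂ℙ :=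
          (integral_indicator hA).symm
      _ = ∫ ω, F₁ ω * F₂ ω ∂ℙ := integral_congr_ae (ae_of_all _ hptw)
      _ = (∫ ω, F₁ ω ∂ℙ) * ∫ ω, F₂ ω ∂ℙ :=
          hindepF.integral_mul_eq_mul_integral hF₁int.aestronglyMeasurable hF₂int.aestronglyMeasurable
      _ = (∫ ω in A, Real.exp (u * ∑ j ∈ Finset.range I₁, Z j ω ^ 2) ∂ℙ)
            * (Real.sqrt c)⁻¹ ^ I₂ := by
          rw [hF₁_def, hF₂_def]
          rw [integral_indicator hA, hT]
  -- the chi-square computation for the first block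
  set gu : ℝ → ℝ := fun s => (Ioi (r₁ ^ 2)).indicator (fun t => Real.exp (u * t)) s
    with hgu_def
  have hgum : Measurable gu := ((measurable_id.const_mul u).exp).indicator measurableSet_Ioi
  have hE₁ : ∫ ω in A, Real.exp (u * ∑ j ∈ Finset.range I₁, Z j ω ^ 2) ∂ℙ
      = ∫ t in Ioi (0:ℝ), gu t * chiSqPDF I₁ t := by
    rw [← integral_indicator hA]
    have hptw : (fun ω => A.indicator
        (fun ω' => Real.exp (u * ∑ j ∈ Finset.range I₁, Z j ω' ^ 2)) ω)
          = fun ω => gu (∑ j ∈ Finset.range I₁, Z j ω ^ 2) := by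
      funext ω
      simp only [hF₁_def, hgu_def]
      by_cases h : ω ∈ A
      · rw [Set.indicator_of_mem h, Set.indicator_of_mem (by exact h)]
      · rw [Set.indicator_of_notMem h, Set.indicator_of_notMem (by exact h)]
    rw [hptw]
    exact aux_chi_expectation hmeas hindep hlaw hI₁ hgum
  -- evaluating the chi-square integral as a tail probability
  have hE₂ : ∫ t in Ioi (0:ℝ), gu t * chiSqPDF I₁ t
      = c ^ (-(I₁:ℝ)/2) * chiSqTail I₁ (c * r₁ ^ 2) := by
    have h1 : ∫ t in Ioi (0:ℝ), gu t * chiSqPDF I₁ t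
        = ∫ t in Ioi (r₁ ^ 2), Real.exp (u * t) * chiSqPDF I₁ t := by
      have : (fun t => gu t * chiSqPDF I₁ t)
          = (Ioi (r₁ ^ 2)).indicator (fun t => Real.exp (u * t) * chiSqPDF I₁ t) := by
        funext t
        by_cases h : t ∈ Ioi (r₁ ^ 2)
        · rw [hgu_def]
          simp only [Set.indicator_of_mem h]
        · rw [hgu_def]
          simp only [Set.indicator_of_notMem h, zero_mul]
      rw [this, setIntegral_indicator measurableSet_Ioi]
      congr 1
      rw [Set.Ioi_inter_Ioi, max_eq_right (by positivity : (0:ℝ) ≤ r₁ ^ 2)]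
    have hN : (2:ℝ) ^ ((I₁:ℝ)/2) * Real.Gamma ((I₁:ℝ)/2) ≠ 0 :=
      (mul_pos (Real.rpow_pos_of_pos two_pos _)
        (Real.Gamma_pos_of_pos (by positivity))).ne'
    have h2 : ∀ t ∈ Ioi (r₁ ^ 2), Real.exp (u * t) * chiSqPDF I₁ t
        = c ^ (-((I₁:ℝ)/2 - 1)) * chiSqPDF I₁ (c * t) := by
      intro t ht
      have ht0 : (0:ℝ) < t := lt_trans (by positivity) ht
      have hexp : Real.exp (u * t) * Real.exp (-t / 2) = Real.exp (-(c * t) / 2) := by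
        rw [← Real.exp_add]
        congr 1
        simp only [hc_def]
        ring
      have hcne : c ^ ((I₁:ℝ)/2 - 1) ≠ 0 := (Real.rpow_pos_of_pos hc _).ne'
      simp only [chiSqPDF]
      rw [Real.mul_rpow hc.le ht0.le, Real.rpow_neg hc.le, ← hexp]
      field_simp
    have h3 : ∫ t in Ioi (r₁ ^ 2), chiSqPDF I₁ (c * t)
        = c⁻¹ * ∫ s in Ioi (c * r₁ ^ 2), chiSqPDF I₁ s := by
      have := integral_comp_mul_left_Ioi (fun s => chiSqPDF I₁ s) (r₁ ^ 2) hc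
      simpa [smul_eq_mul] using this
    have hmax : max (c * r₁ ^ 2) 0 = c * r₁ ^ 2 := max_eq_left (by positivity)
    have hpow : c ^ (-((I₁:ℝ)/2 - 1)) * c⁻¹ = c ^ (-(I₁:ℝ)/2) := by
      rw [← Real.rpow_neg_one c, ← Real.rpow_add hc]
      congr 1
      ring
    rw [h1, setIntegral_congr_fun measurableSet_Ioi h2, MeasureTheory.integral_const_mul, h3,
      chiSqTail, hmax, ← mul_assoc, hpow]
  -- Chernoff / Markov step
  have hone : ∀ ω ∈ A ∩ B, (1:ℝ) ≤ Real.exp (-u * r₂ ^ 2)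
      * Real.exp (u * ∑ j ∈ Finset.range (I₁ + I₂), Z j ω ^ 2) := by
    intro ω hω
    have hS : r₂ ^ 2 < ∑ j ∈ Finset.range (I₁ + I₂), Z j ω ^ 2 := hω.2
    calc (1:ℝ) = Real.exp 0 := Real.exp_zero.symm
      _ ≤ _ := by
          rw [← Real.exp_add]
          apply Real.exp_le_exp.mpr
          nlinarith [mul_le_mul_of_nonneg_left hS.le hu0]
  have hintc : Integrable (fun ω => Real.exp (-u * r₂ ^ 2)
      * Real.exp (u * ∑ j ∈ Finset.range (I₁ + I₂), Z j ω ^ 2)) ℙ :=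
    (hexpint (Finset.range (I₁ + I₂))).const_mul _
  have hPP : (ℙ (A ∩ B)).toReal ≤ Real.exp (-u * r₂ ^ 2)
      * ∫ ω in A, Real.exp (u * ∑ j ∈ Finset.range (I₁ + I₂), Z j ω ^ 2) ∂ℙ := by
    calc (ℙ (A ∩ B)).toReal = ∫ _ω in A ∩ B, (1:ℝ) ∂ℙ := by
          rw [setIntegral_const, smul_eq_mul, mul_one, measureReal_def]
      _ ≤ ∫ ω in A ∩ B, Real.exp (-u * r₂ ^ 2)
            * Real.exp (u * ∑ j ∈ Finset.range (I₁ + I₂), Z j ω ^ 2) ∂ℙ :=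
          setIntegral_mono_on (integrable_const 1).integrableOn hintc.integrableOn
            (hA.inter hB) hone
      _ ≤ ∫ ω in A, Real.exp (-u * r₂ ^ 2)
            * Real.exp (u * ∑ j ∈ Finset.range (I₁ + I₂), Z j ω ^ 2) ∂ℙ :=
          setIntegral_mono_set hintc.integrableOn
            (ae_of_all _ fun ω => by positivity)
            (HasSubset.Subset.eventuallyLE Set.inter_subset_left)
      _ = Real.exp (-u * r₂ ^ 2)
            * ∫ ω in A, Real.exp (u * ∑ j ∈ Finset.range (I₁ + I₂), Z j ω ^ 2) ∂ℙ :=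
          integral_const_mul _ _
  -- final algebra
  have hsq : (Real.sqrt c)⁻¹ ^ I₂ = c ^ (-(I₂:ℝ)/2) := by
    rw [Real.sqrt_eq_rpow, ← Real.rpow_neg hc.le, ← Real.rpow_natCast (c ^ (-(1/2:ℝ))) I₂,
      ← Real.rpow_mul hc.le]
    congr 1
    ring
  have halg : (c ^ (-(I₁:ℝ)/2) * chiSqTail I₁ (c * r₁ ^ 2)) * c ^ (-(I₂:ℝ)/2)
      = chiSqTail I₁ (c * r₁ ^ 2) / c ^ (((I₁ + I₂ : ℕ) : ℝ) / 2) := by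
    have he : (-(I₁:ℝ)/2 + -(I₂:ℝ)/2) + ((I₁ + I₂ : ℕ) : ℝ)/2 = 0 := by push_cast; ring
    rw [mul_right_comm, ← Real.rpow_add hc, mul_comm,
      eq_div_iff (Real.rpow_pos_of_pos hc _).ne', mul_assoc, ← Real.rpow_add hc, he,
      Real.rpow_zero, mul_one]
  calc (ℙ (A ∩ B)).toReal
      ≤ Real.exp (-u * r₂ ^ 2)
          * ∫ ω in A, Real.exp (u * ∑ j ∈ Finset.range (I₁ + I₂), Z j ω ^ 2) ∂ℙ := hPP
    _ = Real.exp (-u * r₂ ^ 2)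
          * ((c ^ (-(I₁:ℝ)/2) * chiSqTail I₁ (c * r₁ ^ 2)) * (Real.sqrt c)⁻¹ ^ I₂) := by
        rw [hkey, hE₁, hE₂]
    _ = Real.exp (-u * r₂ ^ 2) * chiSqTail I₁ (c * r₁ ^ 2)
          / c ^ (((I₁ + I₂ : ℕ) : ℝ) / 2) := by
        rw [hsq, halg, mul_div_assoc]

end AuxLemmas

/-- Chernoff upper bound of Lemma 1: for every `0 ≤ u < 1/2`,
`P(ζ₁ ∩ ζ₂) ≤ e^{−u r₂²} · Q_{I₁}((1 − 2u) r₁²) / (1 − 2u)^{N₂/2}`,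
and consequently `P(ζ₁ ∩ ζ₂)` is at most the infimum of the right-hand side
over all such `u`. -/
theorem chernoff_upper_two_transmissions
    {Ω : Type*} [MeasureSpace Ω] [IsProbabilityMeasure (ℙ : Measure Ω)]
    (Z : ℕ → Ω → ℝ) (hmeas : ∀ i, Measurable (Z i))
    (hindep : iIndepFun Z ℙ)
    (hlaw : ∀ i, Measure.map (Z i) ℙ = gaussianReal 0 1)
    (I₁ I₂ : ℕ) (hI₁ : 0 < I₁) (hI₂ : 0 < I₂)
    (r₁ r₂ : ℝ) (hr₁ : 0 < r₁) (hr₂ : 0 < r₂)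
 :
    (∀ u : ℝ, 0 ≤ u → u < 1 / 2 →
      (ℙ ({ω | r₁ ^ 2 < ∑ j ∈ Finset.range I₁, Z j ω ^ 2} ∩
          {ω | r₂ ^ 2 < ∑ j ∈ Finset.range (I₁ + I₂), Z j ω ^ 2})).toReal
        ≤ Real.exp (-u * r₂ ^ 2) * chiSqTail I₁ ((1 - 2 * u) * r₁ ^ 2) /
            (1 - 2 * u) ^ (((I₁ + I₂ : ℕ) : ℝ) / 2)) ∧
    (ℙ ({ω | r₁ ^ 2 < ∑ j ∈ Finset.range I₁, Z j ω ^ 2} ∩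
        {ω | r₂ ^ 2 < ∑ j ∈ Finset.range (I₁ + I₂), Z j ω ^ 2})).toReal
      ≤ sInf {x : ℝ | ∃ u : ℝ, 0 ≤ u ∧ u < 1 / 2 ∧
          x = Real.exp (-u * r₂ ^ 2) * chiSqTail I₁ ((1 - 2 * u) * r₁ ^ 2) /
            (1 - 2 * u) ^ (((I₁ + I₂ : ℕ) : ℝ) / 2)} := by
  refine ⟨fun u hu0 hu2 =>
    aux_bound Z hmeas hindep hlaw I₁ I₂ hI₁ hI₂ r₁ r₂ hr₁ hr₂ u hu0 hu2, ?_⟩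
  apply le_csInf
  · exact ⟨_, 0, le_refl 0, by norm_num, rfl⟩
  · rintro x ⟨u, hu0, hu2, rfl⟩
    exact aux_bound Z hmeas hindep hlaw I₁ I₂ hI₁ hI₂ r₁ r₂ hr₁ hr₂ u hu0 hu2
end
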